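/- Fix integers a, b, c, d ≥ 1. Consider the quasi-lattice ordered group (ℤ², ℕ²) (componentwise order), with subgroups A = {(am, bn) : m, n ∈ ℤ} and B = {(cm, dn) : m, n ∈ ℤ} of ℤ², and the group isomorphism φ : A → B given by φ(am, bn) = (cm, dn). Let ℤ²* be the HNN extension of ℤ² with respect to A, B, φ, and let ℕ²* be the submonoid of ℤ²* generated by of(ℕ²) and t. Then (ℤ²*, ℕ²*) is quasi-lattice ordered: ℕ²* ∩ (ℕ²*)⁻¹ = {e}, and every pair of elements of ℤ²* with a common upper bound in ℕ²* (for the order u ≤ v iff u⁻¹v ∈ ℕ²*) has a least common upper bound in ℕ²*. -/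

import Mathlib

/-- The left-invariant relation `x ≤ y ↔ x⁻¹ * y ∈ P` associated to a submonoid `P`. -/
def QLO.le {G : Type*} [Group G] (P : Submonoid G) (x y : G) : Prop := x⁻¹ * y ∈ P

/-- `w` is the least common upper bound of `x` and `y` lying in `P`. -/
def QLO.IsLub {G : Type*} [Group G] (P : Submonoid G) (x y w : G) : Prop :=
  w ∈ P ∧ QLO.le P x w ∧ QLO.le P y w ∧
    ∀ z ∈ P, QLO.le P x z → QLO.le P y z → QLO.le P w z

/-- `(G, P)` is a quasi-lattice ordered group. -/
def QLO.IsQLO {G : Type*} [Group G] (P : Submonoid G) : Prop :=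
  (∀ x : G, x ∈ P → x⁻¹ ∈ P → x = 1) ∧
    ∀ x y : G, (∃ z ∈ P, QLO.le P x z ∧ QLO.le P y z) → ∃ w : G, QLO.IsLub P x y w


open HNNExtension Subgroup Multiplicative

namespace Stmt13

abbrev G := Multiplicative (ℤ × ℤ)

-- coordinate helpers
def mk' (x y : ℤ) : G := Multiplicative.ofAdd (x, y)
def pr1 (g : G) : ℤ := (Multiplicative.toAdd g).1
def pr2 (g : G) : ℤ := (Multiplicative.toAdd g).2

@[simp] lemma pr1_mk (x y : ℤ) : pr1 (mk' x y) = x := rfl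
@[simp] lemma pr2_mk (x y : ℤ) : pr2 (mk' x y) = y := rfl
@[simp] lemma pr1_mul (g h : G) : pr1 (g * h) = pr1 g + pr1 h := rfl
@[simp] lemma pr2_mul (g h : G) : pr2 (g * h) = pr2 g + pr2 h := rfl
@[simp] lemma pr1_inv (g : G) : pr1 g⁻¹ = - pr1 g := rfl
@[simp] lemma pr2_inv (g : G) : pr2 g⁻¹ = - pr2 g := rfl
@[simp] lemma pr1_one : pr1 1 = 0 := rfl
@[simp] lemma pr2_one : pr2 1 = 0 := rfl

lemma G_ext {g h : G} (h1 : pr1 g = pr1 h) (h2 : pr2 g = pr2 h) : g = h := by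
  cases g; cases h
  · exact congrArg Multiplicative.ofAdd (Prod.ext h1 h2)

lemma mk'_eta (g : G) : mk' (pr1 g) (pr2 g) = g := G_ext rfl rfl

/-- the box set `[0,p) × [0,q)`. -/
def box (p q : ℤ) : Set G := {g | 0 ≤ pr1 g ∧ pr1 g < p ∧ 0 ≤ pr2 g ∧ pr2 g < q}

/-- key arithmetic: unique decomposition -/
lemma ediv_unique {p x m r : ℤ} (hp : 1 ≤ p) (hx : x = p * m + r) (h0 : 0 ≤ r) (h1 : r < p) :
    m = x / p ∧ r = x % p := by
  constructor
  · rw [hx, add_comm, Int.add_mul_ediv_left _ _ (by omega : p ≠ 0),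
      Int.ediv_eq_zero_of_lt h0 h1, zero_add]
  · rw [hx, add_comm, Int.add_mul_emod_self_left, Int.emod_eq_of_lt h0 h1]

lemma box_isComplement {p q : ℤ} (hp : 1 ≤ p) (hq : 1 ≤ q) (S : Subgroup G)
    (hS : ∀ x : G, x ∈ S ↔ ∃ m n : ℤ, Multiplicative.toAdd x = (p * m, q * n)) :
    IsComplement (S : Set G) (box p q) := by
  rw [isComplement_iff_existsUnique]
  intro g
  refine ⟨⟨⟨mk' (p * (pr1 g / p)) (q * (pr2 g / q)), ?_⟩,
      ⟨mk' (pr1 g % p) (pr2 g % q), ?_, ?_, ?_, ?_⟩⟩, ?_, ?_⟩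
  · exact (hS _).2 ⟨pr1 g / p, pr2 g / q, rfl⟩
  · simpa using Int.emod_nonneg _ (by omega)
  · simpa using Int.emod_lt_of_pos _ (by omega)
  · simpa using Int.emod_nonneg _ (by omega)
  · simpa using Int.emod_lt_of_pos _ (by omega)
  · exact G_ext (by simp [Int.mul_ediv_add_emod]) (by simp [Int.mul_ediv_add_emod])
  · rintro ⟨⟨s, hs⟩, ⟨t, ht⟩⟩ hmul
    obtain ⟨m, n, hmn⟩ := (hS s).1 hs
    simp only at hmul
    obtain ⟨ht1, ht2, ht3, ht4⟩ := ht
    have e1 : pr1 g = p * m + pr1 t := by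
      have := congrArg pr1 hmul; simp at this; rw [← this]; simp [pr1, hmn]
    have e2 : pr2 g = q * n + pr2 t := by
      have := congrArg pr2 hmul; simp at this; rw [← this]; simp [pr2, hmn]
    obtain ⟨hm, hr⟩ := ediv_unique hp e1 ht1 ht2
    obtain ⟨hn, hr2⟩ := ediv_unique hq e2 ht3 ht4
    refine Prod.ext (Subtype.ext ?_) (Subtype.ext ?_)
    · apply G_ext
      · show pr1 s = pr1 (mk' (p * (pr1 g / p)) (q * (pr2 g / q)))
        rw [pr1_mk, ← hm]; simp [pr1, hmn]
      · show pr2 s = pr2 (mk' (p * (pr1 g / p)) (q * (pr2 g / q)))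
        rw [pr2_mk, ← hn]; simp [pr2, hmn]
    · exact G_ext (by simp [hr]) (by simp [hr2])


structure Ctx (a b c d : ℤ) (P : Submonoid G) (A B : Subgroup G) (φ : A ≃* B) : Prop where
  ha : 1 ≤ a
  hb : 1 ≤ b
  hc : 1 ≤ c
  hd : 1 ≤ d
  hP : ∀ x : G, x ∈ P ↔ 0 ≤ pr1 x ∧ 0 ≤ pr2 x
  hA : ∀ x : G, x ∈ A ↔ ∃ m n : ℤ, Multiplicative.toAdd x = (a * m, b * n)
  hB : ∀ x : G, x ∈ B ↔ ∃ m n : ℤ, Multiplicative.toAdd x = (c * m, d * n)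
  hφ : ∀ (x : A) (m n : ℤ), Multiplicative.toAdd (x : G) = (a * m, b * n) →
      Multiplicative.toAdd ((φ x : B) : G) = (c * m, d * n)

section Main

variable {a b c d : ℤ} {P : Submonoid G} {A B : Subgroup G} {φ : A ≃* B}

/-- coordinatewise `A`-floor part -/
def apart (a b : ℤ) (g : G) : G := mk' (a * (pr1 g / a)) (b * (pr2 g / b))
/-- box part for A -/
def abox (a b : ℤ) (g : G) : G := mk' (pr1 g % a) (pr2 g % b)
/-- φ(apart g) -/
def psi (a b c d : ℤ) (g : G) : G := mk' (c * (pr1 g / a)) (d * (pr2 g / b))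

lemma apart_mem (ctx : Ctx a b c d P A B φ) (g : G) : apart a b g ∈ A := (ctx.hA _).2 ⟨pr1 g / a, pr2 g / b, rfl⟩

lemma apart_mul_abox (g : G) : apart a b g * abox a b g = g :=
  G_ext (by simp [apart, abox, Int.mul_ediv_add_emod]) (by simp [apart, abox, Int.mul_ediv_add_emod])

lemma abox_mem_box (ctx : Ctx a b c d P A B φ) (g : G) : abox a b g ∈ box a b := by
  refine ⟨?_, ?_, ?_, ?_⟩ <;> simp [abox]
  · exact Int.emod_nonneg _ (by have := ctx.ha; omega)
  · exact Int.emod_lt_of_pos _ (by have := ctx.ha; omega)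
  · exact Int.emod_nonneg _ (by have := ctx.hb; omega)
  · exact Int.emod_lt_of_pos _ (by have := ctx.hb; omega)

lemma phi_apart (ctx : Ctx a b c d P A B φ) (g : G) : ((φ ⟨apart a b g, apart_mem ctx g⟩ : B) : G) = psi a b c d g := by
  have := ctx.hφ ⟨apart a b g, apart_mem ctx g⟩ (pr1 g / a) (pr2 g / b) rfl
  apply G_ext <;> simp [pr1, pr2, this, psi, mk']

/-- the transversal pair with box transversals -/
noncomputable def dd (ctx : Ctx a b c d P A B φ) : NormalWord.TransversalPair G A B where
  set u := if u = 1 then box a b else box c d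
  compl u := by
    rcases Int.units_eq_one_or u with rfl | rfl
    · simpa using box_isComplement ctx.ha ctx.hb A ctx.hA
    · have : toSubgroup A B (-1) = B := rfl
      simpa [this, (by decide : (-1 : ℤˣ) ≠ 1)] using box_isComplement ctx.hc ctx.hd B ctx.hB

variable (ctx : Ctx a b c d P A B φ)

lemma dd_set_one : (dd ctx).set 1 = box a b := by simp [dd]
lemma dd_set_neg : (dd ctx).set (-1) = box c d := by simp [dd]

/-- the normal word of an element -/
noncomputable def W (x : HNNExtension G A B φ) : NormalWord (dd ctx) := x • NormalWord.empty

/-- head of the normal word -/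
noncomputable def HD (x : HNNExtension G A B φ) : G := (W ctx x).head
/-- all units of the normal word are `+1` -/
def AO (x : HNNExtension G A B φ) : Prop := ∀ p ∈ (W ctx x).toList, p.1 = (1 : ℤˣ)
/-- t-length -/
noncomputable def TL (x : HNNExtension G A B φ) : ℕ := (W ctx x).toList.length

lemma W_mul (x y : HNNExtension G A B φ) : W ctx (x * y) = x • W ctx y := mul_smul x y _

lemma prodW (x : HNNExtension G A B φ) : (W ctx x).prod φ = x := by
  show ((x • NormalWord.empty).prod φ) = x
  rw [NormalWord.prod_smul, NormalWord.prod_empty, mul_one]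

lemma W_of (g : G) : W ctx (HNNExtension.of g) = NormalWord.ofGroup g := by
  show (HNNExtension.of g) • NormalWord.empty = _
  rw [NormalWord.of_smul_eq_smul]
  apply NormalWord.ext <;> simp [NormalWord.empty, NormalWord.ofGroup]

@[simp] lemma HD_of (g : G) : HD ctx (HNNExtension.of g) = g := by simp [HD, W_of]
@[simp] lemma AO_of (g : G) : AO ctx (HNNExtension.of g) := by intro p hp; simp [W_of] at hp
@[simp] lemma TL_of (g : G) : TL ctx (HNNExtension.of g) = 0 := by simp [TL, W_of]
@[simp] lemma HD_one : HD ctx 1 = 1 := by simpa using HD_of ctx 1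
@[simp] lemma AO_one : AO ctx 1 := by simpa using AO_of ctx 1
@[simp] lemma TL_one : TL ctx 1 = 0 := by simpa using TL_of ctx 1

lemma W_of_mul (g : G) (x : HNNExtension G A B φ) :
    W ctx (HNNExtension.of g * x) = g • W ctx x := by
  rw [W_mul, NormalWord.of_smul_eq_smul]

@[simp] lemma HD_of_mul (g : G) (x : HNNExtension G A B φ) :
    HD ctx (HNNExtension.of g * x) = g * HD ctx x := by simp [HD, W_of_mul]
@[simp] lemma TL_of_mul (g : G) (x : HNNExtension G A B φ) :
    TL ctx (HNNExtension.of g * x) = TL ctx x := by simp [TL, W_of_mul]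
lemma AO_of_mul (g : G) (x : HNNExtension G A B φ) :
    AO ctx (HNNExtension.of g * x) ↔ AO ctx x := by
  unfold AO; rw [W_of_mul]; simp

lemma not_cancels (x : HNNExtension G A B φ) (hx : AO ctx x) :
    ¬ NormalWord.Cancels 1 (W ctx x) := by
  rintro ⟨-, h2⟩
  cases hl : (W ctx x).toList with
  | nil => rw [hl] at h2; simp at h2
  | cons p l =>
    rw [hl] at h2
    simp only [List.head?_cons, Option.map_some] at h2
    have hp : p.1 = 1 := hx p (by rw [hl]; exact List.mem_cons_self)
    rw [hp] at h2
    exact absurd (Option.some_injective _ h2) (by decide)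

lemma W_t_mul (x : HNNExtension G A B φ) (hx : AO ctx x) :
    (W ctx (t * x)).head = psi a b c d (HD ctx x) ∧
    (W ctx (t * x)).toList = (1, abox a b (HD ctx x)) :: (W ctx x).toList := by
  rw [W_mul, NormalWord.t_smul_eq_unitsSMul, NormalWord.unitsSMul,
    dif_neg (not_cancels ctx x hx)]
  have hq : ((dd ctx).compl 1).equiv (W ctx x).head =
      (⟨⟨apart a b (HD ctx x), apart_mem ctx _⟩, ⟨abox a b (HD ctx x), by
          rw [dd_set_one]; exact abox_mem_box ctx _⟩⟩ :
        (toSubgroup A B 1 : Subgroup G) × ((dd ctx).set 1)) := by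
    have h1 := ((dd ctx).compl 1).equiv_fst_mul_equiv_snd (W ctx x).head
    exact (((dd ctx).compl 1).existsUnique (W ctx x).head).unique h1
      (by show apart a b (HD ctx x) * abox a b (HD ctx x) = (W ctx x).head
          exact apart_mul_abox (HD ctx x))
  constructor
  · simp only [NormalWord.cons_head, NormalWord.unitsSMulGroup, toSubgroupEquiv_one, hq]
    exact phi_apart ctx _
  · simp only [NormalWord.cons_toList, NormalWord.unitsSMulGroup, hq,
      NormalWord.group_smul_toList, NormalWord.group_smul_head]
    congr 1
    simp

@[simp] lemma HD_t_mul (x : HNNExtension G A B φ) (hx : AO ctx x) :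
    HD ctx (t * x) = psi a b c d (HD ctx x) := (W_t_mul ctx x hx).1

lemma TL_t_mul (x : HNNExtension G A B φ) (hx : AO ctx x) :
    TL ctx (t * x) = TL ctx x + 1 := by
  unfold TL; rw [(W_t_mul ctx x hx).2]; simp

lemma AO_t_mul (x : HNNExtension G A B φ) (hx : AO ctx x) : AO ctx (t * x) := by
  intro p hp
  rw [(W_t_mul ctx x hx).2] at hp
  rcases List.mem_cons.1 hp with rfl | hp
  · rfl
  · exact hx p hp



-- order/meet on G
def gle (g h : G) : Prop := pr1 g ≤ pr1 h ∧ pr2 g ≤ pr2 h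
def meet (g h : G) : G := mk' (min (pr1 g) (pr1 h)) (min (pr2 g) (pr2 h))
def nn (g : G) : Prop := 0 ≤ pr1 g ∧ 0 ≤ pr2 g

lemma nn_iff_gle_one (g : G) : nn g ↔ gle 1 g := by simp [nn, gle]
lemma gle_refl (g : G) : gle g g := ⟨le_refl _, le_refl _⟩
lemma gle_trans {g h k : G} (h1 : gle g h) (h2 : gle h k) : gle g k :=
  ⟨h1.1.trans h2.1, h1.2.trans h2.2⟩
lemma gle_mul_left {g h : G} (k : G) (h1 : gle g h) : gle (k * g) (k * h) := by
  simpa [gle] using h1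
lemma nn_mul {g h : G} (h1 : nn g) (h2 : nn h) : nn (g * h) := by
  obtain ⟨c1, c2⟩ := h1; obtain ⟨d1, d2⟩ := h2
  exact ⟨by simp; omega, by simp; omega⟩
lemma gle_iff_nn (g h : G) : gle g h ↔ nn (g⁻¹ * h) := by
  simp only [gle, nn, pr1_mul, pr2_mul, pr1_inv, pr2_inv]
  omega

lemma ediv_min (p q : ℤ) (hp : 1 ≤ p) (hq : 1 ≤ q) (x y : ℤ) :
    q * (min x y / p) = min (q * (x / p)) (q * (y / p)) := by
  rcases le_total x y with hle | hle
  · rw [min_eq_left hle, min_eq_left]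
    exact mul_le_mul_of_nonneg_left (Int.ediv_le_ediv (by omega) hle) (by omega)
  · rw [min_eq_right hle, min_eq_right]
    exact mul_le_mul_of_nonneg_left (Int.ediv_le_ediv (by omega) hle) (by omega)

-- psi arith lemmas
lemma psi_nn (ctx : Ctx a b c d P A B φ) (g : G) (hg : nn g) : nn (psi a b c d g) := by
  have ha := ctx.ha; have hc := ctx.hc; have hb := ctx.hb; have hd := ctx.hd
  exact ⟨mul_nonneg (by omega) (Int.ediv_nonneg hg.1 (by omega)),
    mul_nonneg (by omega) (Int.ediv_nonneg hg.2 (by omega))⟩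

lemma psi_meet (ctx : Ctx a b c d P A B φ) (g h : G) :
    psi a b c d (meet g h) = meet (psi a b c d g) (psi a b c d h) := by
  have ha := ctx.ha; have hb := ctx.hb; have hc := ctx.hc; have hd := ctx.hd
  apply G_ext
  · show c * (min (pr1 g) (pr1 h) / a) = pr1 (meet _ _)
    rw [ediv_min a c ha hc]; simp [psi, meet]
  · show d * (min (pr2 g) (pr2 h) / b) = pr2 (meet _ _)
    rw [ediv_min b d hb hd]; simp [psi, meet]

lemma psi_mem_B (ctx : Ctx a b c d P A B φ) (g : G) : psi a b c d g ∈ B :=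
  (ctx.hB _).2 ⟨pr1 g / a, pr2 g / b, rfl⟩

lemma psi_large (ctx : Ctx a b c d P A B φ) (m : G) :
    ∀ k : G, gle (mk' (a * max (pr1 m) 0) (b * max (pr2 m) 0)) k →
      gle m (psi a b c d k) := by
  have ha := ctx.ha; have hb := ctx.hb; have hc := ctx.hc; have hd := ctx.hd
  intro k hk
  obtain ⟨h1, h2⟩ := hk
  simp only [pr1_mk, pr2_mk] at h1 h2
  constructor
  · show pr1 m ≤ c * (pr1 k / a)
    have : max (pr1 m) 0 ≤ pr1 k / a := Int.le_ediv_iff_mul_le (by omega) |>.2 (by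
      rw [mul_comm]; omega)
    nlinarith [le_max_left (pr1 m) 0, le_max_right (pr1 m) 0]
  · show pr2 m ≤ d * (pr2 k / b)
    have : max (pr2 m) 0 ≤ pr2 k / b := Int.le_ediv_iff_mul_le (by omega) |>.2 (by
      rw [mul_comm]; omega)
    nlinarith [le_max_left (pr2 m) 0, le_max_right (pr2 m) 0]

-- the cone
local notation "QQ" =>
  Submonoid.closure ((HNNExtension.of '' (P : Set G)) ∪ {HNNExtension.t (φ := φ)})

lemma prod_expand {dd' : NormalWord.TransversalPair G A B} (w : NormalWord dd') :
    w.prod φ = HNNExtension.of w.head *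
      (w.toList.map fun x => (t : HNNExtension G A B φ) ^ (x.1 : ℤ) * HNNExtension.of x.2).prod :=
  rfl

lemma of_mem_QQ (ctx : Ctx a b c d P A B φ) (g : G) (hg : nn g) : HNNExtension.of g ∈ QQ :=
  Submonoid.subset_closure (Or.inl ⟨g, (ctx.hP g).2 hg, rfl⟩)

lemma t_mem_QQ : (HNNExtension.t : HNNExtension G A B φ) ∈ QQ :=
  Submonoid.subset_closure (Or.inr rfl)

lemma mem_QQ_iff (x : HNNExtension G A B φ) :
    x ∈ QQ ↔ AO ctx x ∧ nn (HD ctx x) := by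
  constructor
  · intro hx
    induction hx using Submonoid.closure_induction_left with
    | one => exact ⟨AO_one ctx, by rw [HD_one ctx]; exact ⟨le_refl _, le_refl _⟩⟩
    | mul_left z hz y hy ih =>
      rcases hz with ⟨g, hgP, rfl⟩ | hz
      · refine ⟨(AO_of_mul ctx g y).2 ih.1, ?_⟩
        rw [HD_of_mul]
        exact nn_mul ((ctx.hP g).1 hgP) ih.2
      · rcases hz with rfl
        exact ⟨AO_t_mul ctx y ih.1, by
          rw [HD_t_mul ctx y ih.1]; exact psi_nn ctx _ ih.2⟩
  · rintro ⟨hao, hnn⟩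
    have hx : x = (W ctx x).prod φ := (prodW ctx x).symm
    rw [hx, prod_expand]
    refine Submonoid.mul_mem _ (of_mem_QQ ctx _ hnn) ?_
    have hao' : ∀ p ∈ (W ctx x).toList, p.1 = (1 : ℤˣ) := hao
    have hmem : ∀ p ∈ (W ctx x).toList, p.2 ∈ (dd ctx).set p.1 := fun p hp =>
      HNNExtension.NormalWord.mem_set (W ctx x) p.1 p.2 (by simpa using hp)
    revert hao' hmem
    generalize (W ctx x).toList = l
    intro hao' hmem
    induction l with
    | nil => exact Submonoid.one_mem _
    | cons p l2 ih =>
      rw [List.map_cons, List.prod_cons]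
      refine Submonoid.mul_mem _ ?_ (ih (fun q hq => hao' q (List.mem_cons_of_mem _ hq))
        (fun q hq => hmem q (List.mem_cons_of_mem _ hq)))
      have hp1 : p.1 = 1 := hao' p (List.mem_cons_self)
      have hp2 : p.2 ∈ box a b := by
        have h := hmem p (List.mem_cons_self)
        rwa [hp1, dd_set_one ctx] at h
      rw [hp1]
      refine Submonoid.mul_mem _ (by simpa using t_mem_QQ) (of_mem_QQ ctx _ ⟨hp2.1, hp2.2.2.1⟩)

-- ============ hdf machinery ============
noncomputable def hdf (x : HNNExtension G A B φ) (h : G) : G :=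
  HD ctx (x * HNNExtension.of h)

lemma key_ind (x : HNNExtension G A B φ) (hx : AO ctx x) :
    ∀ y, AO ctx y → AO ctx (x * y) ∧ HD ctx (x * y) = hdf ctx x (HD ctx y) := by
  -- first factor x = of (HD x) * x'
  set x' := HNNExtension.of (HD ctx x)⁻¹ * x with hx'def
  have hxeq : x = HNNExtension.of (HD ctx x) * x' := by
    rw [hx'def, ← mul_assoc, ← map_mul, mul_inv_cancel, map_one, one_mul]
  have hx'Q : x' ∈ QQ := by
    rw [mem_QQ_iff ctx]
    refine ⟨(AO_of_mul ctx _ x).2 hx, ?_⟩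
    rw [hx'def, HD_of_mul, inv_mul_cancel]
    exact ⟨le_refl _, le_refl _⟩
  have main : ∀ z ∈ QQ, ∀ y, AO ctx y →
      AO ctx (z * y) ∧ HD ctx (z * y) = HD ctx (z * HNNExtension.of (HD ctx y)) := by
    intro z hz
    induction hz using Submonoid.closure_induction_left with
    | one =>
      intro y hy
      exact ⟨by rwa [one_mul], by rw [one_mul, one_mul, HD_of]⟩
    | mul_left w hw z2 hz2 ih =>
      intro y hy
      rcases hw with ⟨g, hgP, rfl⟩ | hw
      · obtain ⟨ih1, ih2⟩ := ih y hy
        rw [mul_assoc, mul_assoc]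
        exact ⟨(AO_of_mul ctx _ _).2 ih1, by
          rw [HD_of_mul, HD_of_mul, ih2]⟩
      · rcases hw with rfl
        obtain ⟨ih1, ih2⟩ := ih y hy
        obtain ⟨ih1', ih2'⟩ := ih (HNNExtension.of (HD ctx y)) (AO_of ctx _)
        rw [mul_assoc, mul_assoc]
        refine ⟨AO_t_mul ctx _ ih1, ?_⟩
        rw [HD_t_mul ctx _ ih1, HD_t_mul ctx _ ih1', ih2]
  intro y hy
  obtain ⟨m1, m2⟩ := main x' hx'Q y hy
  constructor
  · rw [hxeq, mul_assoc]
    exact (AO_of_mul ctx _ _).2 m1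
  · have e1 : HD ctx (x * y) = HD ctx x * HD ctx (x' * HNNExtension.of (HD ctx y)) := by
      conv_lhs => rw [hxeq, mul_assoc]
      rw [HD_of_mul, m2]
    have e2 : hdf ctx x (HD ctx y) = HD ctx x * HD ctx (x' * HNNExtension.of (HD ctx y)) := by
      rw [hdf]
      conv_lhs => rw [hxeq, mul_assoc]
      rw [HD_of_mul]
    rw [e1, e2]

lemma AO_mul {x y : HNNExtension G A B φ} (hx : AO ctx x) (hy : AO ctx y) :
    AO ctx (x * y) := (key_ind ctx x hx y hy).1

lemma HD_mul {x y : HNNExtension G A B φ} (hx : AO ctx x) (hy : AO ctx y) :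
    HD ctx (x * y) = hdf ctx x (HD ctx y) := (key_ind ctx x hx y hy).2

@[simp] lemma hdf_of (g h : G) : hdf ctx (HNNExtension.of g) h = g * h := by
  rw [hdf, ← map_mul, HD_of]
@[simp] lemma hdf_one (h : G) : hdf ctx 1 h = h := by
  rw [hdf, one_mul, HD_of]

-- ============ chunk 4 ============

lemma mul_meet (g u v : G) : g * meet u v = meet (g * u) (g * v) := by
  apply G_ext
  · show pr1 g + min (pr1 u) (pr1 v) = min (pr1 g + pr1 u) (pr1 g + pr1 v)
    exact (min_add_add_left _ _ _).symm
  · show pr2 g + min (pr2 u) (pr2 v) = min (pr2 g + pr2 u) (pr2 g + pr2 v)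
    exact (min_add_add_left _ _ _).symm

lemma meet_eq_left {h h' : G} (hle : gle h h') : meet h h' = h := by
  apply G_ext
  · show min (pr1 h) (pr1 h') = pr1 h
    exact min_eq_left hle.1
  · show min (pr2 h) (pr2 h') = pr2 h
    exact min_eq_left hle.2

lemma gle_meet_left (h h' : G) : gle (meet h h') h := ⟨min_le_left _ _, min_le_left _ _⟩
lemma gle_meet_right (h h' : G) : gle (meet h h') h' := ⟨min_le_right _ _, min_le_right _ _⟩
lemma gle_meet {g h h' : G} (h1 : gle g h) (h2 : gle g h') : gle g (meet h h') :=
  ⟨le_min h1.1 h2.1, le_min h1.2 h2.2⟩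

/-- generic induction: prove a property for all `AO` elements -/
lemma AO_induction (ctx : Ctx a b c d P A B φ) {motive : HNNExtension G A B φ → Prop}
    (hone : motive 1)
    (hof : ∀ (g : G) (x : HNNExtension G A B φ), motive x → motive (HNNExtension.of g * x))
    (ht : ∀ x : HNNExtension G A B φ, AO ctx x → motive x → motive (t * x)) :
    ∀ x, AO ctx x → motive x := by
  intro x hx
  set x' := HNNExtension.of (HD ctx x)⁻¹ * x with hx'def
  have hxeq : x = HNNExtension.of (HD ctx x) * x' := by
    rw [hx'def, ← mul_assoc, ← map_mul, mul_inv_cancel, map_one, one_mul]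
  have hx'Q : x' ∈ QQ := by
    rw [mem_QQ_iff ctx]
    refine ⟨(AO_of_mul ctx _ x).2 hx, ?_⟩
    rw [hx'def, HD_of_mul, inv_mul_cancel]
    exact ⟨le_refl _, le_refl _⟩
  have main : ∀ z ∈ QQ, motive z := by
    intro z hz
    induction hz using Submonoid.closure_induction_left with
    | one => exact hone
    | mul_left w hw z2 hz2 ih =>
      rcases hw with ⟨g, hgP, rfl⟩ | hw
      · exact hof g z2 ih
      · rcases hw with rfl
        exact ht z2 ((mem_QQ_iff ctx z2).1 hz2).1 ih
  rw [hxeq]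
  exact hof _ _ (main x' hx'Q)

lemma hdf_of_mul' (g : G) (z : HNNExtension G A B φ) (k : G) :
    hdf ctx (HNNExtension.of g * z) k = g * hdf ctx z k := by
  rw [hdf, mul_assoc, HD_of_mul, hdf]

lemma hdf_t_mul (z : HNNExtension G A B φ) (hz : AO ctx z) (k : G) :
    hdf ctx (t * z) k = psi a b c d (hdf ctx z k) := by
  rw [hdf, mul_assoc, HD_t_mul ctx _ (AO_mul ctx hz (AO_of ctx _)), hdf]

lemma hdf_meet (x : HNNExtension G A B φ) (hx : AO ctx x) (h h' : G) :
    hdf ctx x (meet h h') = meet (hdf ctx x h) (hdf ctx x h') := by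
  revert h h'
  refine AO_induction ctx (motive := fun x => ∀ h h' : G,
    hdf ctx x (meet h h') = meet (hdf ctx x h) (hdf ctx x h')) ?_ ?_ ?_ x hx
  · intro h h'; simp
  · intro g z ih h h'
    rw [hdf_of_mul', hdf_of_mul', hdf_of_mul', ih, mul_meet]
  · intro z hz ih h h'
    rw [hdf_t_mul ctx z hz, hdf_t_mul ctx z hz, hdf_t_mul ctx z hz, ih, psi_meet ctx]

lemma hdf_mono (x : HNNExtension G A B φ) (hx : AO ctx x) {h h' : G} (hle : gle h h') :
    gle (hdf ctx x h) (hdf ctx x h') := by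
  have hm := hdf_meet ctx x hx h h'
  rw [meet_eq_left hle] at hm
  rw [hm]
  exact gle_meet_right _ _

lemma UNBD (x : HNNExtension G A B φ) (hx : AO ctx x) :
    ∀ m : G, ∃ h : G, nn h ∧ gle m (hdf ctx x h) := by
  refine AO_induction ctx (motive := fun x => ∀ m : G, ∃ h : G, nn h ∧ gle m (hdf ctx x h))
    ?_ ?_ ?_ x hx
  · intro m
    refine ⟨mk' (max (pr1 m) 0) (max (pr2 m) 0), ⟨by simp, by simp⟩, ?_⟩
    rw [hdf_one]
    constructor
    · simpa using le_max_left (pr1 m) 0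
    · simpa using le_max_left (pr2 m) 0
  · intro g z ih m
    obtain ⟨h, hn, hg⟩ := ih (g⁻¹ * m)
    refine ⟨h, hn, ?_⟩
    rw [hdf_of_mul']
    have := gle_mul_left g hg
    rw [← mul_assoc, mul_inv_cancel, one_mul] at this
    exact this
  · intro z hz ih m
    obtain ⟨h, hn, hg⟩ := ih (mk' (a * max (pr1 m) 0) (b * max (pr2 m) 0))
    refine ⟨h, hn, ?_⟩
    rw [hdf_t_mul ctx z hz]
    exact psi_large ctx m _ hg

lemma TL0 (x : HNNExtension G A B φ) (h0 : TL ctx x = 0) :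
    x = HNNExtension.of (HD ctx x) := by
  have h1 : (W ctx x).toList = [] := List.eq_nil_of_length_eq_zero h0
  have h2 := prodW ctx x
  rw [prod_expand, h1] at h2
  simpa [HD] using h2.symm

lemma decomp (x : HNNExtension G A B φ) (hx : AO ctx x) (h0 : TL ctx x ≠ 0) :
    ∃ x₁, AO ctx x₁ ∧ x = HNNExtension.of (HD ctx x) * (t * x₁) ∧
      TL ctx x = TL ctx x₁ + 1 := by
  obtain ⟨p, l, hl⟩ : ∃ p l, (W ctx x).toList = p :: l := by
    cases h : (W ctx x).toList with
    | nil => exact absurd (by simp [TL, h]) h0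
    | cons p l => exact ⟨_, _, rfl⟩
  have hp1 : p.1 = 1 := hx p (hl ▸ List.mem_cons_self)
  have hchain : List.Chain' (fun a b : ℤˣ × G => a.2 ∈ toSubgroup A B a.1 → a.1 = b.1) l := by
    have := (W ctx x).chain
    rw [hl] at this
    exact (List.isChain_cons.1 this).2
  let w₁ : NormalWord (dd ctx) :=
    { head := p.2
      toList := l
      mem_set := fun u g hg =>
        HNNExtension.NormalWord.mem_set (W ctx x) u g (hl ▸ List.mem_cons_of_mem _ hg)
      chain := hchain }
  have hW1 : W ctx (w₁.prod φ) = w₁ := NormalWord.prod_smul_empty φ w₁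
  refine ⟨w₁.prod φ, ?_, ?_, ?_⟩
  · intro q hq
    rw [hW1] at hq
    exact hx q (hl ▸ List.mem_cons_of_mem _ hq)
  · have h2 := prodW ctx x
    rw [prod_expand, hl, List.map_cons, List.prod_cons, hp1] at h2
    conv_lhs => rw [← h2]
    rw [prod_expand w₁]
    simp only [Units.val_one, zpow_one]
    rw [mul_assoc]
    rfl
  · rw [TL, TL, hW1, hl]
    simp [w₁]

lemma hdf_rec1 (q : G) (x₁ : HNNExtension G A B φ) (h1 : AO ctx x₁) (h : G) :
    hdf ctx (HNNExtension.of q * (t * x₁)) h = q * psi a b c d (hdf ctx x₁ h) := by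
  rw [hdf_of_mul', hdf_t_mul ctx x₁ h1]

lemma MODB (x : HNNExtension G A B φ) (hx : AO ctx x) (h0 : TL ctx x ≠ 0) (k : G) :
    (HD ctx x)⁻¹ * hdf ctx x k ∈ B := by
  obtain ⟨x₁, ha1, heq, -⟩ := decomp ctx x hx h0
  have : hdf ctx x k = HD ctx x * psi a b c d (hdf ctx x₁ k) := by
    conv_lhs => rw [heq]
    rw [hdf_rec1 ctx _ _ ha1]
  rw [this, ← mul_assoc, inv_mul_cancel, one_mul]
  exact psi_mem_B ctx _

-- ============ t-count homomorphism ============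

noncomputable def Lh : HNNExtension G A B φ →* Multiplicative ℤ :=
  HNNExtension.lift 1 (Multiplicative.ofAdd 1) (fun a => by simp)

lemma Lh_aux (l : List (ℤˣ × G)) :
    Lh (φ := φ) ((l.map fun x => (t : HNNExtension G A B φ) ^ ((x.1 : ℤˣ) : ℤ) *
      HNNExtension.of x.2).prod) =
      Multiplicative.ofAdd ((l.map fun p => ((p.1 : ℤˣ) : ℤ)).sum) := by
  induction l with
  | nil => simp
  | cons p l2 ih =>
    rw [List.map_cons, List.prod_cons, map_mul, map_mul, map_zpow, ih, List.map_cons,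
      List.sum_cons]
    have h1 : Lh (φ := φ) t = Multiplicative.ofAdd 1 := HNNExtension.lift_t _ _ _
    have h2 : Lh (φ := φ) (HNNExtension.of p.2) = 1 := by
      rw [Lh, HNNExtension.lift_of]; rfl
    rw [h1, h2, mul_one]
    have h3 : (Multiplicative.ofAdd (1:ℤ)) ^ ((p.1 : ℤˣ) : ℤ) =
        Multiplicative.ofAdd ((p.1 : ℤˣ) : ℤ) := by
      rw [← ofAdd_zsmul]; congr 1; simp
    rw [h3, ← ofAdd_add]

lemma LSUM (x : HNNExtension G A B φ) (hx : AO ctx x) :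
    Lh (φ := φ) x = Multiplicative.ofAdd (TL ctx x : ℤ) := by
  conv_lhs => rw [← prodW ctx x, prod_expand]
  rw [map_mul]
  have h2 : Lh (φ := φ) (HNNExtension.of (W ctx x).head) = 1 := by
    rw [Lh, HNNExtension.lift_of]; rfl
  rw [h2, one_mul, Lh_aux]
  congr 1
  rw [TL]
  have : ∀ l : List (ℤˣ × G), (∀ p ∈ l, p.1 = (1:ℤˣ)) →
      (l.map fun p => ((p.1 : ℤˣ) : ℤ)).sum = (l.length : ℤ) := by
    intro l
    induction l with
    | nil => simp
    | cons p l2 ih =>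
      intro hall
      rw [List.map_cons, List.sum_cons, ih (fun q hq => hall q (List.mem_cons_of_mem _ hq)),
        hall p (List.mem_cons_self)]
      simp only [Units.val_one, List.length_cons]
      push_cast
      ring
  exact this _ hx

lemma part1 (ctx : Ctx a b c d P A B φ) (x : HNNExtension G A B φ) (h1 : x ∈ QQ) (h2 : x⁻¹ ∈ QQ) : x = 1 := by
  obtain ⟨a1, n1⟩ := (mem_QQ_iff ctx x).1 h1
  obtain ⟨a2, n2⟩ := (mem_QQ_iff ctx x⁻¹).1 h2
  have l1 := LSUM ctx x a1
  have l2 := LSUM ctx x⁻¹ a2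
  rw [map_inv, l1] at l2
  have : (TL ctx x⁻¹ : ℤ) = -(TL ctx x : ℤ) := by
    have := congrArg Multiplicative.toAdd l2
    simpa using this.symm
  have hT : TL ctx x = 0 := by omega
  have hx0 := TL0 ctx x hT
  have hhd : HD ctx x = 1 := by
    have hxi : x⁻¹ = HNNExtension.of (HD ctx x)⁻¹ := by
      conv_lhs => rw [hx0]
      rw [← map_inv]
    have : HD ctx x⁻¹ = (HD ctx x)⁻¹ := by rw [hxi, HD_of]
    rw [this] at n2
    obtain ⟨u1, u2⟩ := n1; obtain ⟨v1, v2⟩ := n2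
    simp only [pr1_inv, pr2_inv] at v1 v2
    apply G_ext
    · simp only [pr1_one]; omega
    · simp only [pr2_one]; omega
  rw [hx0, hhd, map_one]

-- ============ chunk 5a: D-set operations ============

/-- `y` is in the D-set of `v` -/
def Din (ctx : Ctx a b c d P A B φ) (v y : HNNExtension G A B φ) : Prop :=
  AO ctx y ∧ v * y ∈ QQ

/-- `y` is in the principal upper set of `w` -/
def UpM (P' : Submonoid G) {A B : Subgroup G} {φ : A ≃* B} (w y : HNNExtension G A B φ) : Prop :=
  w⁻¹ * y ∈ Submonoid.closure ((HNNExtension.of '' (P' : Set G)) ∪ {HNNExtension.t (φ := φ)})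

lemma UpM_self (P' : Submonoid G) {A B : Subgroup G} {φ : A ≃* B} (w : HNNExtension G A B φ) : UpM P' w w := by
  rw [UpM, inv_mul_cancel]; exact Submonoid.one_mem _

lemma AO_of_UpM (ctx : Ctx a b c d P A B φ) {w y : HNNExtension G A B φ}
    (hw : AO ctx w) (hy : UpM P w y) : AO ctx y := by
  have h : y = w * (w⁻¹ * y) := by group
  rw [h]
  exact AO_mul ctx hw ((mem_QQ_iff ctx _).1 hy).1

lemma ceil_le {c q k : ℤ} (hc : 1 ≤ c) : q ≤ c * k ↔ -((-q)/c) ≤ k := by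
  rw [neg_le, Int.le_ediv_iff_mul_le (by omega : (0:ℤ) < c), neg_mul, neg_le_neg_iff, mul_comm]

/-- least element of `A` whose `φ`-image dominates `q` -/
def Aim (a b c d : ℤ) (q : G) : G := mk' (a * -((- pr1 q)/c)) (b * -((- pr2 q)/d))
/-- `φ (Aim q)` -/
def Bceil (a b c d : ℤ) (q : G) : G := mk' (c * -((- pr1 q)/c)) (d * -((- pr2 q)/d))

lemma Aim_mem_A (ctx : Ctx a b c d P A B φ) (q : G) : Aim a b c d q ∈ A :=
  (ctx.hA _).2 ⟨-((- pr1 q)/c), -((- pr2 q)/d), rfl⟩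

lemma t_mul_Aim (ctx : Ctx a b c d P A B φ) (q : G) :
    (t : HNNExtension G A B φ) * HNNExtension.of (Aim a b c d q) =
      HNNExtension.of (Bceil a b c d q) * t := by
  have h1 := HNNExtension.t_mul_of (φ := φ) ⟨Aim a b c d q, Aim_mem_A ctx q⟩
  have h2 : ((φ ⟨Aim a b c d q, Aim_mem_A ctx q⟩ : B) : G) = Bceil a b c d q := by
    have := ctx.hφ ⟨Aim a b c d q, Aim_mem_A ctx q⟩ (-((- pr1 q)/c)) (-((- pr2 q)/d)) rfl
    apply G_ext <;> simp [pr1, pr2, this, Bceil, mk']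
  rw [h1, h2]

lemma gle_Bceil (ctx : Ctx a b c d P A B φ) (q : G) : gle q (Bceil a b c d q) := by
  have hc := ctx.hc; have hd := ctx.hd
  constructor
  · show pr1 q ≤ c * _
    exact (ceil_le hc).2 (le_refl _)
  · show pr2 q ≤ d * _
    exact (ceil_le hd).2 (le_refl _)

lemma gle_psi_iff (ctx : Ctx a b c d P A B φ) (q h : G) :
    gle q (psi a b c d h) ↔ gle (Aim a b c d q) h := by
  have ha := ctx.ha; have hb := ctx.hb; have hc := ctx.hc; have hd := ctx.hd
  constructor
  · rintro ⟨h1, h2⟩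
    constructor
    · show a * -((- pr1 q)/c) ≤ pr1 h
      have e1 : -((- pr1 q)/c) ≤ pr1 h / a := (ceil_le hc).1 h1
      have e2 := (Int.le_ediv_iff_mul_le (by omega : (0:ℤ) < a)).1 e1
      rw [mul_comm]
      exact e2
    · show b * -((- pr2 q)/d) ≤ pr2 h
      have e1 : -((- pr2 q)/d) ≤ pr2 h / b := (ceil_le hd).1 h2
      have e2 := (Int.le_ediv_iff_mul_le (by omega : (0:ℤ) < b)).1 e1
      rw [mul_comm]
      exact e2
  · rintro ⟨h1, h2⟩
    constructor
    · show pr1 q ≤ c * (pr1 h / a)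
      have h1' : a * (-((- pr1 q)/c)) ≤ pr1 h := h1
      rw [ceil_le hc, Int.le_ediv_iff_mul_le (by omega : (0:ℤ) < a), mul_comm]
      exact h1'
    · show pr2 q ≤ d * (pr2 h / b)
      have h2' : b * (-((- pr2 q)/d)) ≤ pr2 h := h2
      rw [ceil_le hd, Int.le_ediv_iff_mul_le (by omega : (0:ℤ) < b), mul_comm]
      exact h2'

/-- right multiplication by `of s` -/
lemma Dop_of (ctx : Ctx a b c d P A B φ) (v : HNNExtension G A B φ) (s : G) :
    (∀ y, ¬ Din ctx v y) → (∀ y, ¬ Din ctx (v * HNNExtension.of s) y) := by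
  intro hD y ⟨hy, hq⟩
  refine hD (HNNExtension.of s * y) ⟨(AO_of_mul ctx s y).2 hy, ?_⟩
  rwa [mul_assoc] at hq

lemma Dop_of' (ctx : Ctx a b c d P A B φ) (v w : HNNExtension G A B φ) (s : G)
    (hw : AO ctx w) (hD : ∀ y, Din ctx v y ↔ UpM P w y) :
    AO ctx (HNNExtension.of s⁻¹ * w) ∧
    ∀ y, Din ctx (v * HNNExtension.of s) y ↔ UpM P (HNNExtension.of s⁻¹ * w) y := by
  constructor
  · exact (AO_of_mul ctx _ w).2 hw
  intro y
  have key : Din ctx (v * HNNExtension.of s) y ↔ Din ctx v (HNNExtension.of s * y) := by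
    constructor
    · rintro ⟨hy, hq⟩
      exact ⟨(AO_of_mul ctx s y).2 hy, by rwa [mul_assoc] at hq⟩
    · rintro ⟨hy, hq⟩
      exact ⟨(AO_of_mul ctx s y).1 hy, by rwa [← mul_assoc] at hq⟩
  rw [key, hD]
  unfold UpM
  rw [mul_inv_rev, map_inv, inv_inv, mul_assoc]

/-- right multiplication by `t`, empty case -/
lemma Dop_t_emp (ctx : Ctx a b c d P A B φ) (v : HNNExtension G A B φ) :
    (∀ y, ¬ Din ctx v y) → (∀ y, ¬ Din ctx (v * t) y) := by
  intro hD y ⟨hy, hq⟩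
  refine hD (t * y) ⟨AO_t_mul ctx y hy, ?_⟩
  rwa [mul_assoc] at hq

lemma Din_t_iff (ctx : Ctx a b c d P A B φ) (v : HNNExtension G A B φ) (y) :
    Din ctx (v * t) y ↔ (AO ctx y ∧ Din ctx v (t * y)) := by
  constructor
  · rintro ⟨hy, hq⟩
    exact ⟨hy, AO_t_mul ctx y hy, by rwa [mul_assoc] at hq⟩
  · rintro ⟨hy, -, hq⟩
    exact ⟨hy, by rwa [← mul_assoc] at hq⟩

/-- right multiplication by `t`, principal case, `TL w₀ = 0` -/
lemma Dop_t_TL0 (ctx : Ctx a b c d P A B φ) (v w₀ : HNNExtension G A B φ)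
    (hw : AO ctx w₀) (h0 : TL ctx w₀ = 0)
    (hD : ∀ y, Din ctx v y ↔ UpM P w₀ y) :
    ∀ y, Din ctx (v * t) y ↔
      UpM P (HNNExtension.of (Aim a b c d (HD ctx w₀))) y := by
  intro y
  set q := HD ctx w₀ with hq
  have hw₀ : w₀ = HNNExtension.of q := TL0 ctx w₀ h0
  rw [Din_t_iff ctx]
  constructor
  · rintro ⟨hy, hty⟩
    rw [hD] at hty
    rw [UpM, hw₀, ← map_inv] at hty
    -- hty : of q⁻¹ * (t * y) ∈ QQ
    obtain ⟨ha1, hn1⟩ := (mem_QQ_iff ctx _).1 hty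
    rw [HD_of_mul, HD_t_mul ctx y hy] at hn1
    -- hn1 : nn (q⁻¹ * psi (HD y))
    have hge : gle q (psi a b c d (HD ctx y)) := by
      rw [gle_iff_nn]; exact hn1
    have hge2 := (gle_psi_iff ctx q (HD ctx y)).1 hge
    rw [UpM, ← map_inv, mem_QQ_iff ctx]
    refine ⟨(AO_of_mul ctx _ y).2 hy, ?_⟩
    rw [HD_of_mul]
    rw [← gle_iff_nn]
    exact hge2
  · intro hU
    have hy : AO ctx y := AO_of_UpM ctx (AO_of ctx _) hU
    refine ⟨hy, ?_⟩
    rw [hD, UpM, hw₀, ← map_inv]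
    set w'' := (HNNExtension.of (Aim a b c d q))⁻¹ * y with hw''
    have hw''Q : w'' ∈ QQ := hU
    have hyeq : y = HNNExtension.of (Aim a b c d q) * w'' := by rw [hw'']; group
    have key : HNNExtension.of q⁻¹ * (t * y) =
        HNNExtension.of (q⁻¹ * Bceil a b c d q) * (t * w'') := by
      conv_lhs => rw [hyeq]
      rw [← mul_assoc (t : HNNExtension G A B φ), t_mul_Aim ctx, map_mul]
      group
    rw [key]
    exact Submonoid.mul_mem _
      (of_mem_QQ ctx _ (by rw [← gle_iff_nn]; exact gle_Bceil ctx q))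
      (Submonoid.mul_mem _ t_mem_QQ hw''Q)

/-- right multiplication by `t`, principal case, `TL w₀ ≠ 0`, head in `B` -/
lemma Dop_t_TL1B (ctx : Ctx a b c d P A B φ) (v w₀ : HNNExtension G A B φ)
    (hw : AO ctx w₀) (h0 : TL ctx w₀ ≠ 0) (hB : HD ctx w₀ ∈ B)
    (hD : ∀ y, Din ctx v y ↔ UpM P w₀ y) :
    ∃ w', AO ctx w' ∧ ∀ y, Din ctx (v * t) y ↔ UpM P w' y := by
  obtain ⟨w₁, hw₁, heq, -⟩ := decomp ctx w₀ hw h0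
  set k := HD ctx w₀ with hk
  set kA : G := ((φ.symm ⟨k, hB⟩ : A) : G) with hkA
  have hconj : (t : HNNExtension G A B φ)⁻¹ * HNNExtension.of k * t =
      HNNExtension.of kA := (HNNExtension.equiv_symm_eq_conj (φ := φ) ⟨k, hB⟩).symm
  refine ⟨HNNExtension.of kA * w₁, (AO_of_mul ctx _ _).2 hw₁, ?_⟩
  intro y
  rw [Din_t_iff ctx]
  constructor
  · rintro ⟨hy, hty⟩
    rw [hD] at hty
    set w'' := w₀⁻¹ * (t * y) with hw''
    have hyeq : y = HNNExtension.of kA * (w₁ * w'') := by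
      have e1 : t * y = w₀ * w'' := by rw [hw'']; group
      have e2 : y = t⁻¹ * (w₀ * w'') := by rw [← e1]; group
      rw [e2, heq]
      calc t⁻¹ * (HNNExtension.of k * (t * w₁) * w'')
          = (t⁻¹ * HNNExtension.of k * t) * (w₁ * w'') := by group
        _ = HNNExtension.of kA * (w₁ * w'') := by rw [hconj]
    rw [UpM]
    have : (HNNExtension.of kA * w₁)⁻¹ * y = w'' := by rw [hyeq]; group
    rw [this]
    exact hty
  · intro hU
    set w'' := (HNNExtension.of kA * w₁)⁻¹ * y with hw''
    have hw''Q : w'' ∈ QQ := hU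
    have hyeq : y = HNNExtension.of kA * (w₁ * w'') := by rw [hw'']; group
    have hy : AO ctx y := by
      rw [hyeq]
      exact (AO_of_mul ctx _ _).2 (AO_mul ctx hw₁ ((mem_QQ_iff ctx _).1 hw''Q).1)
    refine ⟨hy, ?_⟩
    rw [hD, UpM]
    have : w₀⁻¹ * (t * y) = w'' := by
      rw [hyeq, heq]
      calc (HNNExtension.of k * (t * w₁))⁻¹ * (t * (HNNExtension.of kA * (w₁ * w'')))
          = w₁⁻¹ * t⁻¹ * ((HNNExtension.of k)⁻¹ * (t * HNNExtension.of kA * t⁻¹) *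
              HNNExtension.of k) * (HNNExtension.of k)⁻¹ * t * (w₁ * w'') := by group
        _ = w'' := by
            rw [show t * HNNExtension.of kA * t⁻¹ = HNNExtension.of k by
              rw [← hconj]; group]
            group
    rw [this]
    exact hw''Q

/-- right multiplication by `t`, principal case, `TL w₀ ≠ 0`, head not in `B`: empty -/
lemma Dop_t_TL1nB (ctx : Ctx a b c d P A B φ) (v w₀ : HNNExtension G A B φ)
    (hw : AO ctx w₀) (h0 : TL ctx w₀ ≠ 0) (hB : HD ctx w₀ ∉ B)
    (hD : ∀ y, Din ctx v y ↔ UpM P w₀ y) :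
    ∀ y, ¬ Din ctx (v * t) y := by
  intro y hyD
  rw [Din_t_iff ctx] at hyD
  obtain ⟨hy, hty⟩ := hyD
  rw [hD] at hty
  set w'' := w₀⁻¹ * (t * y) with hw''
  have hw''Q : w'' ∈ QQ := hty
  have he : t * y = w₀ * w'' := by rw [hw'']; group
  have hAOw'' := ((mem_QQ_iff ctx _).1 hw''Q).1
  have h1 : HD ctx (t * y) = psi a b c d (HD ctx y) := HD_t_mul ctx y hy
  have h2 : HD ctx (w₀ * w'') = hdf ctx w₀ (HD ctx w'') := HD_mul ctx hw hAOw''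
  have h3 : (HD ctx w₀)⁻¹ * hdf ctx w₀ (HD ctx w'') ∈ B := MODB ctx w₀ hw h0 _
  apply hB
  have h4 : psi a b c d (HD ctx y) = hdf ctx w₀ (HD ctx w'') := by rw [← h1, ← h2, he]
  have h5 : HD ctx w₀ = psi a b c d (HD ctx y) *
      ((HD ctx w₀)⁻¹ * hdf ctx w₀ (HD ctx w''))⁻¹ := by rw [h4]; group
  rw [h5]
  exact Subgroup.mul_mem _ (psi_mem_B ctx _) (Subgroup.inv_mem _ h3)

-- ============ chunk 5b: peel, NEG lemma, MASTER ============

lemma rprod_expand (w : HNNExtension.NormalWord.ReducedWord G A B) :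
    w.prod φ = HNNExtension.of w.head *
      (w.toList.map fun x => (t : HNNExtension G A B φ) ^ ((x.1 : ℤˣ) : ℤ) *
        HNNExtension.of x.2).prod := rfl

lemma peel (ctx : Ctx a b c d P A B φ) (u : HNNExtension G A B φ) (h0 : TL ctx u ≠ 0) :
    ∃ (u' : HNNExtension G A B φ) (ε : ℤˣ) (s : G),
      u = u' * ((t : HNNExtension G A B φ) ^ (ε : ℤ) * HNNExtension.of s) ∧
      TL ctx u' + 1 = TL ctx u ∧
      (∀ p, (W ctx u').toList.getLast? = some p →
        (p.2 ∈ toSubgroup A B p.1 → p.1 = ε)) := by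
  obtain ⟨L₀, pe, hL⟩ : ∃ L₀ pe, (W ctx u).toList = L₀ ++ [pe] := by
    rcases List.eq_nil_or_concat (W ctx u).toList with h | ⟨L₀, pe, h⟩
    · exact absurd (by simp [TL, h]) h0
    · exact ⟨L₀, pe, by rw [h, List.concat_eq_append]⟩
  have hch := (W ctx u).chain
  rw [hL, List.isChain_append] at hch
  set w' : NormalWord (dd ctx) :=
    { head := (W ctx u).head
      toList := L₀
      mem_set := fun u'' g hg => HNNExtension.NormalWord.mem_set (W ctx u) u'' g
        (hL ▸ List.mem_append_left _ hg)
      chain := hch.1 } with hw'def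
  have hW' : W ctx (w'.prod φ) = w' := NormalWord.prod_smul_empty φ w'
  refine ⟨w'.prod φ, pe.1, pe.2, ?_, ?_, ?_⟩
  · have h2 := prodW ctx u
    rw [prod_expand, hL, List.map_append, List.prod_append] at h2
    conv_lhs => rw [← h2]
    rw [prod_expand w']
    rw [← mul_assoc]
    congr 1
    simp
  · rw [TL, TL, hW', hL]
    simp [hw'def]
  · intro p hp
    rw [hW'] at hp
    exact hch.2.2 p (by simpa [hw'def] using hp) pe (by simp)

-- B-side decomposition
def bpart (c d : ℤ) (g : G) : G := mk' (c * (pr1 g / c)) (d * (pr2 g / d))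
def bbox (c d : ℤ) (g : G) : G := mk' (pr1 g % c) (pr2 g % d)
def chi (a b c d : ℤ) (g : G) : G := mk' (a * (pr1 g / c)) (b * (pr2 g / d))

lemma bpart_mem_B (ctx : Ctx a b c d P A B φ) (g : G) : bpart c d g ∈ B :=
  (ctx.hB _).2 ⟨pr1 g / c, pr2 g / d, rfl⟩

lemma chi_mem_A (ctx : Ctx a b c d P A B φ) (g : G) : chi a b c d g ∈ A :=
  (ctx.hA _).2 ⟨pr1 g / c, pr2 g / d, rfl⟩

lemma bpart_mul_bbox (g : G) : bpart c d g * bbox c d g = g :=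
  G_ext (by simp [bpart, bbox, Int.mul_ediv_add_emod]) (by simp [bpart, bbox, Int.mul_ediv_add_emod])

lemma mem_B_of_bbox (ctx : Ctx a b c d P A B φ) {g : G} (hg : bbox c d g ∈ B) : g ∈ B := by
  rw [← bpart_mul_bbox (c := c) (d := d) g]
  exact Subgroup.mul_mem _ (bpart_mem_B ctx g) hg

lemma tinv_mul_bpart (ctx : Ctx a b c d P A B φ) (g : G) :
    (t : HNNExtension G A B φ)⁻¹ * HNNExtension.of (bpart c d g) =
      HNNExtension.of (chi a b c d g) * t⁻¹ := by
  have h1 := HNNExtension.inv_t_mul_of (φ := φ) ⟨bpart c d g, bpart_mem_B ctx g⟩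
  have h2 : ((φ.symm ⟨bpart c d g, bpart_mem_B ctx g⟩ : A) : G) = chi a b c d g := by
    have hmem := chi_mem_A ctx g
    have h3 := ctx.hφ ⟨chi a b c d g, hmem⟩ (pr1 g / c) (pr2 g / d) rfl
    have h4 : φ ⟨chi a b c d g, hmem⟩ = ⟨bpart c d g, bpart_mem_B ctx g⟩ := by
      apply Subtype.ext
      apply G_ext <;> simp [pr1, pr2, h3, bpart, mk']
    rw [← h4, MulEquiv.symm_apply_apply]
  rw [h1, h2]

lemma tinv_mul_head (ctx : Ctx a b c d P A B φ) (g : G) :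
    (t : HNNExtension G A B φ)⁻¹ * HNNExtension.of g =
      HNNExtension.of (chi a b c d g) * (t⁻¹ * HNNExtension.of (bbox c d g)) := by
  conv_lhs => rw [← bpart_mul_bbox (c := c) (d := d) g]
  rw [map_mul, ← mul_assoc, tinv_mul_bpart ctx, mul_assoc]

/-- Britton-style lemma: if `u' * t⁻¹` is reduced (junction condition), `y` is positive-form
and `u' * (t⁻¹ * y)` lies in the cone, then the `t⁻¹` must cancel into `y`. -/
lemma NEG (ctx : Ctx a b c d P A B φ) (u' : HNNExtension G A B φ)
    (hjunc : ∀ p, (W ctx u').toList.getLast? = some p →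
      (p.2 ∈ toSubgroup A B p.1 → p.1 = (-1 : ℤˣ)))
    (y : HNNExtension G A B φ) (hy : AO ctx y)
    (hq : u' * ((t : HNNExtension G A B φ)⁻¹ * y) ∈ QQ) :
    ∃ η, AO ctx η ∧ y = t * η := by
  by_cases hcase : TL ctx y ≠ 0 ∧ HD ctx y ∈ B
  · obtain ⟨h0, hB⟩ := hcase
    obtain ⟨y₁, hy₁, hyeq, -⟩ := decomp ctx y hy h0
    refine ⟨HNNExtension.of ((φ.symm ⟨HD ctx y, hB⟩ : A) : G) * y₁,
      (AO_of_mul ctx _ _).2 hy₁, ?_⟩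
    have ht := HNNExtension.t_mul_of (φ := φ) (φ.symm ⟨HD ctx y, hB⟩)
    rw [MulEquiv.apply_symm_apply] at ht
    have ht' : (t : HNNExtension G A B φ) *
        HNNExtension.of ((φ.symm ⟨HD ctx y, hB⟩ : A) : G) =
        HNNExtension.of (HD ctx y) * t := ht
    conv_lhs => rw [hyeq]
    calc HNNExtension.of (HD ctx y) * (t * y₁)
        = (HNNExtension.of (HD ctx y) * t) * y₁ := by group
      _ = ((t : HNNExtension G A B φ) *
            HNNExtension.of ((φ.symm ⟨HD ctx y, hB⟩ : A) : G)) * y₁ := by rw [← ht']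
      _ = t * (HNNExtension.of ((φ.symm ⟨HD ctx y, hB⟩ : A) : G) * y₁) := by group
  · exfalso
    push_neg at hcase
    set g := HD ctx y with hgdef
    set σ := u' * ((t : HNNExtension G A B φ)⁻¹ * y) with hσdef
    have hAOσ : AO ctx σ := ((mem_QQ_iff ctx σ).1 hq).1
    -- y expansion
    have hyexp : y = HNNExtension.of g *
        ((W ctx y).toList.map fun x => (t : HNNExtension G A B φ) ^ ((x.1 : ℤˣ) : ℤ) *
          HNNExtension.of x.2).prod := by
      conv_lhs => rw [← prodW ctx y]
      rw [prod_expand]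
      rfl
    -- chain fact for the `(-1, bbox) :: ylist` part
    have hchain2 : List.IsChain (fun a' b' : ℤˣ × G => a'.2 ∈ toSubgroup A B a'.1 → a'.1 = b'.1)
        (((-1 : ℤˣ), bbox c d g) :: (W ctx y).toList) := by
      rw [List.isChain_cons]
      refine ⟨?_, (W ctx y).chain⟩
      intro q hq' hbb
      exfalso
      have h1 : g ∈ B := mem_B_of_bbox ctx hbb
      have h2 : (W ctx y).toList ≠ [] := by
        intro hnil
        rw [hnil] at hq'
        simp at hq'
      exact (hcase (fun hh => h2 (List.length_eq_zero_iff.1 hh))) h1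
    -- the key conjugation identity
    have key2 : (t : HNNExtension G A B φ)⁻¹ * y =
        HNNExtension.of (chi a b c d g) *
          ((t : HNNExtension G A B φ)⁻¹ * (HNNExtension.of (bbox c d g) *
            ((W ctx y).toList.map fun x => (t : HNNExtension G A B φ) ^ ((x.1 : ℤˣ) : ℤ) *
              HNNExtension.of x.2).prod)) := by
      conv_lhs => rw [hyexp]
      rw [← mul_assoc, tinv_mul_head ctx]
      group
    -- case on the list of u'
    rcases List.eq_nil_or_concat (W ctx u').toList with hnil | ⟨L₁, pk, hL⟩
    · -- u' = of (head)
      have hu'eq : u' = HNNExtension.of (HD ctx u') := TL0 ctx u' (by simp [TL, hnil])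
      set R : HNNExtension.NormalWord.ReducedWord G A B :=
        { head := HD ctx u' * chi a b c d g
          toList := ((-1 : ℤˣ), bbox c d g) :: (W ctx y).toList
          chain := hchain2 } with hRdef
      have hprod : R.prod φ = σ := by
        rw [rprod_expand, hσdef]
        conv_rhs => rw [key2]
        conv_rhs => rw [hu'eq]
        simp only [hRdef, List.map_cons, List.prod_cons, map_mul]
        have : ((((-1 : ℤˣ) : ℤˣ) : ℤ)) = (-1 : ℤ) := by decide
        rw [this, zpow_neg_one]
        group
      have hfst := (HNNExtension.ReducedWord.map_fst_eq_and_of_prod_eq φ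
        (hprod.trans (prodW ctx σ).symm :
          R.prod φ = ((W ctx σ).toReducedWord).prod φ)).1
      have hmem : (-1 : ℤˣ) ∈ (W ctx σ).toList.map Prod.fst := by
        rw [← hfst, hRdef]
        simp
      obtain ⟨p, hp, hp1⟩ := List.mem_map.1 hmem
      have := hAOσ p hp
      rw [this] at hp1
      exact absurd hp1 (by decide)
    · -- u' ends with a letter
      rw [List.concat_eq_append] at hL
      have hch := (W ctx u').chain
      rw [hL, List.isChain_append] at hch
      have hjunc' : pk.2 ∈ toSubgroup A B pk.1 → pk.1 = (-1 : ℤˣ) :=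
        hjunc pk (by rw [hL]; exact List.getLast?_concat)
      have hchain3 : List.IsChain (fun a' b' : ℤˣ × G => a'.2 ∈ toSubgroup A B a'.1 → a'.1 = b'.1)
          ((pk.1, pk.2 * chi a b c d g) :: ((-1 : ℤˣ), bbox c d g) :: (W ctx y).toList) := by
        rw [List.isChain_cons_cons]
        refine ⟨?_, hchain2⟩
        intro hmem2
        rcases Int.units_eq_one_or pk.1 with h1 | h1
        · rw [h1] at hmem2
          have : pk.2 ∈ A := by
            have hchiA := chi_mem_A ctx g
            have := (Subgroup.mul_mem_cancel_right A hchiA).1 (by exact hmem2)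
            exact this
          rw [h1] at hjunc'
          have := hjunc' (by exact this)
          exact absurd this (by decide)
        · rw [h1]
      have hchain4 : List.IsChain (fun a' b' : ℤˣ × G => a'.2 ∈ toSubgroup A B a'.1 → a'.1 = b'.1)
          (L₁ ++ (pk.1, pk.2 * chi a b c d g) :: ((-1 : ℤˣ), bbox c d g) :: (W ctx y).toList) := by
        rw [List.isChain_append]
        refine ⟨hch.1, hchain3, ?_⟩
        intro x hx q hq'
        have := hch.2.2 x hx pk (by simp)
        simp only [List.head?_cons, Option.mem_def, Option.some.injEq] at hq'
        rw [← hq']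
        exact this
      set R : HNNExtension.NormalWord.ReducedWord G A B :=
        { head := (W ctx u').head
          toList := L₁ ++ (pk.1, pk.2 * chi a b c d g) ::
            ((-1 : ℤˣ), bbox c d g) :: (W ctx y).toList
          chain := hchain4 } with hRdef
      have hu'eq : u' = HNNExtension.of (W ctx u').head *
          ((L₁.map fun x => (t : HNNExtension G A B φ) ^ ((x.1 : ℤˣ) : ℤ) *
            HNNExtension.of x.2).prod *
           ((t : HNNExtension G A B φ) ^ ((pk.1 : ℤˣ) : ℤ) * HNNExtension.of pk.2)) := by
        conv_lhs => rw [← prodW ctx u']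
        rw [prod_expand, hL, List.map_append, List.prod_append]
        simp
      have hprod : R.prod φ = σ := by
        rw [rprod_expand, hσdef]
        conv_rhs => rw [key2]
        conv_rhs => rw [hu'eq]
        simp only [hRdef, List.map_cons, List.prod_cons, List.map_append, List.prod_append,
          map_mul]
        have : ((((-1 : ℤˣ) : ℤˣ) : ℤ)) = (-1 : ℤ) := by decide
        rw [this, zpow_neg_one]
        group
      have hfst := (HNNExtension.ReducedWord.map_fst_eq_and_of_prod_eq φ
        (hprod.trans (prodW ctx σ).symm :
          R.prod φ = ((W ctx σ).toReducedWord).prod φ)).1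
      have hmem : (-1 : ℤˣ) ∈ (W ctx σ).toList.map Prod.fst := by
        rw [← hfst, hRdef]
        simp
      obtain ⟨p, hp, hp1⟩ := List.mem_map.1 hmem
      have := hAOσ p hp
      rw [this] at hp1
      exact absurd hp1 (by decide)

-- ============ chunk 5c: t⁻¹ op, MASTER ============

lemma Dop_tinv_emp (ctx : Ctx a b c d P A B φ) (u' : HNNExtension G A B φ)
    (hjunc : ∀ p, (W ctx u').toList.getLast? = some p →
      (p.2 ∈ toSubgroup A B p.1 → p.1 = (-1 : ℤˣ)))
    (hemp : ∀ y, ¬ Din ctx u' y) :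
    ∀ y, ¬ Din ctx (u' * t⁻¹) y := by
  rintro y ⟨hy, hq⟩
  rw [mul_assoc] at hq
  obtain ⟨η, hη, rfl⟩ := NEG ctx u' hjunc y hy hq
  refine hemp η ⟨hη, ?_⟩
  have e : u' * (t⁻¹ * (t * η)) = u' * η := by group
  rwa [e] at hq

lemma Dop_tinv (ctx : Ctx a b c d P A B φ) (u' w₀ : HNNExtension G A B φ)
    (hjunc : ∀ p, (W ctx u').toList.getLast? = some p →
      (p.2 ∈ toSubgroup A B p.1 → p.1 = (-1 : ℤˣ)))
    (hw₀ : AO ctx w₀) (hD : ∀ y, Din ctx u' y ↔ UpM P w₀ y) :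
    ∀ y, Din ctx (u' * t⁻¹) y ↔ UpM P (t * w₀) y := by
  intro y
  constructor
  · rintro ⟨hy, hq⟩
    rw [mul_assoc] at hq
    obtain ⟨η, hη, rfl⟩ := NEG ctx u' hjunc y hy hq
    have hq' : u' * η ∈ QQ := by
      have e : u' * (t⁻¹ * (t * η)) = u' * η := by group
      rwa [e] at hq
    have hU := (hD η).1 ⟨hη, hq'⟩
    show (t * w₀)⁻¹ * (t * η) ∈ QQ
    have e2 : (t * w₀)⁻¹ * (t * η) = w₀⁻¹ * η := by group
    rw [e2]
    exact hU
  · intro hU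
    set w'' := (t * w₀)⁻¹ * y with hw''
    have hw''Q : w'' ∈ QQ := hU
    have hyeq : y = t * (w₀ * w'') := by rw [hw'']; group
    have hAOw'' := ((mem_QQ_iff ctx _).1 hw''Q).1
    have hη : Din ctx u' (w₀ * w'') := by
      constructor
      · exact AO_mul ctx hw₀ hAOw''
      · have := (hD (w₀ * w'')).2 (by
          show w₀⁻¹ * (w₀ * w'') ∈ QQ
          have e : w₀⁻¹ * (w₀ * w'') = w'' := by group
          rw [e]; exact hw''Q)
        exact this.2
    constructor
    · rw [hyeq]
      exact AO_t_mul ctx _ (AO_mul ctx hw₀ hAOw'')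
    · have e : u' * t⁻¹ * y = u' * (w₀ * w'') := by rw [hyeq]; group
      rw [e]
      exact hη.2

lemma MASTER (ctx : Ctx a b c d P A B φ) :
    ∀ (n : ℕ) (u : HNNExtension G A B φ), TL ctx u = n →
    (∀ y, ¬ Din ctx u y) ∨ (∃ w, AO ctx w ∧ ∀ y, Din ctx u y ↔ UpM P w y) := by
  intro n
  induction n with
  | zero =>
    intro u h0
    right
    refine ⟨HNNExtension.of ((HD ctx u)⁻¹), AO_of ctx _, ?_⟩
    have hu : u = HNNExtension.of (HD ctx u) := TL0 ctx u h0
    have key : ∀ y : HNNExtension G A B φ,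
        (HNNExtension.of ((HD ctx u)⁻¹) : HNNExtension G A B φ)⁻¹ * y = u * y := by
      intro y
      conv_rhs => rw [hu]
      rw [map_inv, inv_inv]
    intro y
    constructor
    · rintro ⟨hy, hq⟩
      show _ ∈ QQ
      rw [key]
      exact hq
    · intro hU
      have hq : u * y ∈ QQ := by rw [← key]; exact hU
      refine ⟨?_, hq⟩
      have hAOuy : AO ctx (u * y) := ((mem_QQ_iff ctx _).1 hq).1
      have e2 : y = HNNExtension.of ((HD ctx u)⁻¹) * (u * y) := by
        rw [map_inv]
        conv_rhs => rw [← hu]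
        group
      rw [e2]
      exact (AO_of_mul ctx _ _).2 hAOuy
  | succ n ih =>
    intro u h0
    obtain ⟨u', ε, s, hequ, hTL, hjunc⟩ := peel ctx u (by omega)
    have hu' := ih u' (by omega)
    rcases Int.units_eq_one_or ε with rfl | rfl
    · -- ε = 1
      have hsplit : u = (u' * t) * HNNExtension.of s := by
        rw [hequ]
        simp only [Units.val_one, zpow_one]
        group
      rcases hu' with hemp | ⟨w₀, hw₀, hD⟩
      · left
        rw [hsplit]
        exact Dop_of ctx _ s (Dop_t_emp ctx _ hemp)
      · by_cases h0' : TL ctx w₀ = 0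
        · right
          have hmid := Dop_t_TL0 ctx u' w₀ hw₀ h0' hD
          obtain ⟨hAO', hfin⟩ := Dop_of' ctx (u' * t) _ s (AO_of ctx _) hmid
          exact ⟨_, hAO', by rw [hsplit]; exact hfin⟩
        · by_cases hB : HD ctx w₀ ∈ B
          · right
            obtain ⟨w', hw', hmid⟩ := Dop_t_TL1B ctx u' w₀ hw₀ h0' hB hD
            obtain ⟨hAO', hfin⟩ := Dop_of' ctx (u' * t) w' s hw' hmid
            exact ⟨_, hAO', by rw [hsplit]; exact hfin⟩
          · left
            rw [hsplit]
            exact Dop_of ctx _ s (Dop_t_TL1nB ctx u' w₀ hw₀ h0' hB hD)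
    · -- ε = -1
      have hsplit : u = (u' * t⁻¹) * HNNExtension.of s := by
        rw [hequ]
        have e : (((-1 : ℤˣ) : ℤ)) = (-1 : ℤ) := rfl
        rw [e, zpow_neg_one]
        group
      rcases hu' with hemp | ⟨w₀, hw₀, hD⟩
      · left
        rw [hsplit]
        exact Dop_of ctx _ s (Dop_tinv_emp ctx u' hjunc hemp)
      · right
        have hmid := Dop_tinv ctx u' w₀ hjunc hw₀ hD
        obtain ⟨hAO', hfin⟩ := Dop_of' ctx (u' * t⁻¹) _ s (AO_t_mul ctx w₀ hw₀) hmid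
        exact ⟨_, hAO', by rw [hsplit]; exact hfin⟩

-- least elements of meet-closed nonneg sets
lemma least_mem (S : Set G) (hne : S.Nonempty)
    (hmeet : ∀ {h h'}, h ∈ S → h' ∈ S → meet h h' ∈ S)
    (hnn : ∀ h ∈ S, nn h) : ∃ h₀ ∈ S, ∀ h ∈ S, gle h₀ h := by
  obtain ⟨he, heS⟩ := hne
  obtain ⟨m₁, ⟨h₁, h₁S, h₁e⟩, hmin1⟩ := Int.exists_least_of_bdd
    (P := fun z => ∃ h ∈ S, pr1 h = z)
    ⟨0, fun z ⟨h, hS, hz⟩ => hz ▸ (hnn h hS).1⟩ ⟨pr1 he, he, heS, rfl⟩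
  obtain ⟨m₂, ⟨h₂, h₂S, h₂e⟩, hmin2⟩ := Int.exists_least_of_bdd
    (P := fun z => ∃ h ∈ S, pr2 h = z)
    ⟨0, fun z ⟨h, hS, hz⟩ => hz ▸ (hnn h hS).2⟩ ⟨pr2 he, he, heS, rfl⟩
  refine ⟨meet h₁ h₂, hmeet h₁S h₂S, ?_⟩
  intro h hS
  constructor
  · show min (pr1 h₁) (pr1 h₂) ≤ pr1 h
    have := hmin1 (pr1 h) ⟨h, hS, rfl⟩
    rw [← h₁e] at this
    exact le_trans (min_le_left _ _) this
  · show min (pr2 h₁) (pr2 h₂) ≤ pr2 h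
    have := hmin2 (pr2 h) ⟨h, hS, rfl⟩
    rw [← h₂e] at this
    exact le_trans (min_le_right _ _) this

/-- the central σ-existence result: conditional least upper bounds of `{1, u}` -/
lemma sigma_exists (ctx : Ctx a b c d P A B φ) (u z : HNNExtension G A B φ)
    (hz : z ∈ QQ) (huz : u⁻¹ * z ∈ QQ) :
    ∃ σ : HNNExtension G A B φ, (σ ∈ QQ ∧ u⁻¹ * σ ∈ QQ) ∧
      ∀ z', z' ∈ QQ → u⁻¹ * z' ∈ QQ → σ⁻¹ * z' ∈ QQ := by
  rcases MASTER ctx (TL ctx u⁻¹) u⁻¹ rfl with hemp | ⟨w₀, hw₀, hD⟩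
  · exact absurd ⟨((mem_QQ_iff ctx z).1 hz).1, huz⟩ (hemp z)
  · -- least h₀ of {h | nn h ∧ nn (hdf w₀ h)}
    obtain ⟨h₀, ⟨hh₀nn, hh₀⟩, hmin⟩ := least_mem {h : G | nn h ∧ nn (hdf ctx w₀ h)}
      (by
        obtain ⟨h, hn, hgle⟩ := UNBD ctx w₀ hw₀ (1 : G)
        exact ⟨h, hn, by rw [nn_iff_gle_one]; exact hgle⟩)
      (by
        rintro h h' ⟨hn, hp⟩ ⟨hn', hp'⟩
        refine ⟨⟨le_min hn.1 hn'.1, le_min hn.2 hn'.2⟩, ?_⟩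
        rw [hdf_meet ctx w₀ hw₀]
        exact ⟨le_min hp.1 hp'.1, le_min hp.2 hp'.2⟩)
      (fun h hh => hh.1)
  -- σ := w₀ * of h₀
    refine ⟨w₀ * HNNExtension.of h₀, ⟨?_, ?_⟩, ?_⟩
    · rw [mem_QQ_iff ctx]
      refine ⟨AO_mul ctx hw₀ (AO_of ctx _), ?_⟩
      rw [HD_mul ctx hw₀ (AO_of ctx _), HD_of]
      exact hh₀
    · have hUp : UpM P w₀ (w₀ * HNNExtension.of h₀) := by
        show w₀⁻¹ * (w₀ * HNNExtension.of h₀) ∈ QQ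
        have e : w₀⁻¹ * (w₀ * HNNExtension.of h₀) = HNNExtension.of h₀ := by group
        rw [e]
        exact of_mem_QQ ctx _ hh₀nn
      exact ((hD _).2 hUp).2
    · intro z' hz' huz'
      have hUp : UpM P w₀ z' := (hD z').1 ⟨((mem_QQ_iff ctx z').1 hz').1, huz'⟩
      set w'' := w₀⁻¹ * z' with hw''def
      have hw''Q : w'' ∈ QQ := hUp
      have hAOw'' := ((mem_QQ_iff ctx _).1 hw''Q).1
      have hz'eq : z' = w₀ * w'' := by rw [hw''def]; group
      have hHD : hdf ctx w₀ (HD ctx w'') = HD ctx z' := by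
        rw [hz'eq, HD_mul ctx hw₀ hAOw'']
      have hmem : HD ctx w'' ∈ {h : G | nn h ∧ nn (hdf ctx w₀ h)} :=
        ⟨((mem_QQ_iff ctx _).1 hw''Q).2, by rw [hHD]; exact ((mem_QQ_iff ctx z').1 hz').2⟩
      have hgle := hmin _ hmem
      have e : (w₀ * HNNExtension.of h₀)⁻¹ * z' = HNNExtension.of (h₀⁻¹) * w'' := by
        rw [hz'eq, map_inv]
        group
      rw [e, mem_QQ_iff ctx]
      refine ⟨(AO_of_mul ctx _ _).2 hAOw'', ?_⟩
      rw [HD_of_mul, ← gle_iff_nn]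
      exact hgle

-- ============ final assembly ============

lemma main_QLO (ctx : Ctx a b c d P A B φ) :
    QLO.IsQLO (Submonoid.closure
      ((HNNExtension.of '' (P : Set G)) ∪ {HNNExtension.t (φ := φ)})) := by
  constructor
  · exact fun x hx hxi => part1 ctx x hx hxi
  · rintro x y ⟨z, hzQ, hxz, hyz⟩
    obtain ⟨σ₁, ⟨hσ₁Q, hσ₁x⟩, hσ₁min⟩ := sigma_exists ctx x z hzQ hxz
    have hz2 : σ₁⁻¹ * z ∈ QQ := hσ₁min z hzQ hxz
    have hu2 : (σ₁⁻¹ * y)⁻¹ * (σ₁⁻¹ * z) ∈ QQ := by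
      have e : (σ₁⁻¹ * y)⁻¹ * (σ₁⁻¹ * z) = y⁻¹ * z := by group
      rw [e]; exact hyz
    obtain ⟨σ₂, ⟨hσ₂Q, hσ₂u⟩, hσ₂min⟩ := sigma_exists ctx (σ₁⁻¹ * y) (σ₁⁻¹ * z) hz2 hu2
    refine ⟨σ₁ * σ₂, Submonoid.mul_mem _ hσ₁Q hσ₂Q, ?_, ?_, ?_⟩
    · show x⁻¹ * (σ₁ * σ₂) ∈ _
      have e : x⁻¹ * (σ₁ * σ₂) = (x⁻¹ * σ₁) * σ₂ := by group
      rw [e]; exact Submonoid.mul_mem _ hσ₁x hσ₂Q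
    · show y⁻¹ * (σ₁ * σ₂) ∈ _
      have e : y⁻¹ * (σ₁ * σ₂) = (σ₁⁻¹ * y)⁻¹ * σ₂ := by group
      rw [e]; exact hσ₂u
    · intro z' hz'Q hxz' hyz'
      show (σ₁ * σ₂)⁻¹ * z' ∈ _
      have h1 : σ₁⁻¹ * z' ∈ QQ := hσ₁min z' hz'Q hxz'
      have h2 : (σ₁⁻¹ * y)⁻¹ * (σ₁⁻¹ * z') ∈ QQ := by
        have e : (σ₁⁻¹ * y)⁻¹ * (σ₁⁻¹ * z') = y⁻¹ * z' := by group
        rw [e]; exact hyz'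
      have h3 := hσ₂min (σ₁⁻¹ * z') h1 h2
      have e : (σ₁ * σ₂)⁻¹ * z' = σ₂⁻¹ * (σ₁⁻¹ * z') := by group
      rw [e]; exact h3

end Main
end Stmt13

theorem stmt13 (a b c d : ℤ) (ha : 1 ≤ a) (hb : 1 ≤ b) (hc : 1 ≤ c) (hd : 1 ≤ d)
    -- P is the copy of ℕ² inside ℤ² (written multiplicatively)
    (P : Submonoid (Multiplicative (ℤ × ℤ)))
    (hP : ∀ x : Multiplicative (ℤ × ℤ), x ∈ P ↔
      0 ≤ (Multiplicative.toAdd x).1 ∧ 0 ≤ (Multiplicative.toAdd x).2)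
    -- A = {(am, bn)} and B = {(cm, dn)}
    (A B : Subgroup (Multiplicative (ℤ × ℤ)))
    (hA : ∀ x : Multiplicative (ℤ × ℤ), x ∈ A ↔
      ∃ m n : ℤ, Multiplicative.toAdd x = (a * m, b * n))
    (hB : ∀ x : Multiplicative (ℤ × ℤ), x ∈ B ↔
      ∃ m n : ℤ, Multiplicative.toAdd x = (c * m, d * n))
    -- φ : A → B, φ(am, bn) = (cm, dn)
    (φ : A ≃* B)
    (hφ : ∀ (x : A) (m n : ℤ),
      Multiplicative.toAdd (x : Multiplicative (ℤ × ℤ)) = (a * m, b * n) →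
      Multiplicative.toAdd ((φ x : B) : Multiplicative (ℤ × ℤ)) = (c * m, d * n)) :
    QLO.IsQLO (Submonoid.closure
      ((HNNExtension.of '' (P : Set (Multiplicative (ℤ × ℤ)))) ∪
        {HNNExtension.t (φ := φ)})) := by
  exact Stmt13.main_QLO ⟨ha, hb, hc, hd, hP, hA, hB, hφ⟩
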